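/- arXiv:1703.01362 — 3 statements merged into one kernel-verified Lean document; each statement's English description precedes it below -/
import Mathlib

section
/- Let W be a channel from a finite set X to a finite set Z, M ≥ 2, and for codewords x_1,…,x_M ∈ X let P̂(z) := (1/M) Σ_{w=1}^M W(z|x_w). Let P_Z be a probability distribution on Z with minimum positive mass μ_Z := min{P_Z(z) : P_Z(z) > 0}, and suppose P̂ ≪ P_Z for all codeword choices. Define g_2(x_1,…,x_M) := D(P̂‖P_Z). Then replacing any single codeword x_i by x_i' changes g_2 by at most (1/M) log(M|Z|/μ_Z²). -/
open Finset

/-- Relative entropy (natural log) between two pmfs on a finite set. -/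
noncomputable def KL {Z : Type*} [Fintype Z] (P Q : Z → ℝ) : ℝ :=
  ∑ z, P z * Real.log (P z / Q z)

/-- Minimum positive mass of a distribution on a finite set. -/
noncomputable def minPosMass {Z : Type*} [Fintype Z] (P : Z → ℝ) : ℝ :=
  sInf {r : ℝ | ∃ z, P z = r ∧ 0 < r}

private lemma gibbs_aux {Z : Type*} [Fintype Z] (b PZ : Z → ℝ)
    (hb0 : ∀ z, 0 ≤ b z) (hb1 : ∑ z, b z = 1)
    (hPZ0 : ∀ z, 0 ≤ PZ z) (hPZ1 : ∑ z, PZ z = 1)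
    (hbP : ∀ z, PZ z = 0 → b z = 0) :
    0 ≤ ∑ z, b z * Real.log (b z / PZ z) := by
  have key : ∀ z, b z * Real.log (PZ z / b z) ≤ PZ z - b z := by
    intro z
    rcases (hb0 z).eq_or_lt with h | h
    · simp [← h, hPZ0 z]
    · have hPz : 0 < PZ z := by
        rcases (hPZ0 z).eq_or_lt with h' | h'
        · exact absurd (hbP z h'.symm) (by linarith)
        · exact h'
      have hlog := Real.log_le_sub_one_of_pos (show 0 < PZ z / b z by positivity)
      calc b z * Real.log (PZ z / b z) ≤ b z * (PZ z / b z - 1) :=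
            mul_le_mul_of_nonneg_left hlog h.le
        _ = PZ z - b z := by field_simp
  have h2 : ∑ z, b z * Real.log (PZ z / b z) ≤ 0 := by
    calc ∑ z, b z * Real.log (PZ z / b z) ≤ ∑ z, (PZ z - b z) :=
          Finset.sum_le_sum fun z _ => key z
      _ = 0 := by rw [Finset.sum_sub_distrib, hb1, hPZ1]; ring
  have h3 : ∑ z, b z * Real.log (b z / PZ z)
      = -∑ z, b z * Real.log (PZ z / b z) := by
    rw [← Finset.sum_neg_distrib]
    refine Finset.sum_congr rfl fun z _ => ?_
    rw [show PZ z / b z = (b z / PZ z)⁻¹ by rw [inv_div], Real.log_inv]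
    ring
  rw [h3]
  linarith

private lemma ptwise_aux (M : ℝ) (hM : 0 < M) (C a b P μ : ℝ)
    (hC : 0 ≤ C) (ha : 0 ≤ a) (hb : 0 ≤ b) (hP : 0 ≤ P)
    (hCP : P = 0 → C = 0) (haP : P = 0 → a = 0) (hbP : P = 0 → b = 0)
    (hμ0 : 0 < μ) (hμP : 0 < P → μ ≤ P)
    (hp1 : C + a / M ≤ 1) :
    (C + a / M) * Real.log ((C + a / M) / P) -
      (C + b / M) * Real.log ((C + b / M) / P)
      ≤ a / M + a / M * Real.log (1 / μ) + b / M * Real.log M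
        - b / M * Real.log (b / P) := by
  rcases hP.eq_or_lt with hP0 | hP0
  · rw [hCP hP0.symm, haP hP0.symm, hbP hP0.symm]; simp
  -- main case : 0 < P
  have hadivM : 0 ≤ a / M := by positivity
  have hbdivM : 0 ≤ b / M := by positivity
  have hp0 : 0 ≤ C + a / M := by linarith
  have hq0 : 0 ≤ C + b / M := by linarith
  -- bound (ii)
  have h2 : a / M * Real.log ((C + a / M) / P) ≤ a / M * Real.log (1 / μ) := by
    rcases ha.eq_or_lt with h | h
    · simp [← h]
    · have hp : 0 < C + a / M := by
        have : 0 < a / M := by positivity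
        linarith
      have hlog : Real.log ((C + a / M) / P) ≤ Real.log (1 / μ) := by
        apply Real.log_le_log (by positivity)
        exact div_le_div₀ (by norm_num) hp1 hμ0 (hμP hP0)
      exact mul_le_mul_of_nonneg_left hlog hadivM
  -- bound (iii)
  have h3 : -(b / M * Real.log ((C + b / M) / P))
      ≤ b / M * Real.log M - b / M * Real.log (b / P) := by
    rcases hb.eq_or_lt with h | h
    · simp [← h]
    · have hbM : 0 < b / M := by positivity
      have hq : 0 < C + b / M := by linarith
      have e1 : Real.log (b / P) - Real.log M = Real.log (b / M / P) := by
        rw [show b / M / P = (b / P) / M by ring,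
          Real.log_div (by positivity) (ne_of_gt hM)]
      have e2 : Real.log (b / M / P) ≤ Real.log ((C + b / M) / P) := by
        apply Real.log_le_log (by positivity)
        apply div_le_div₀ hq0 (by linarith) hP0 le_rfl
      rw [← e1] at e2
      have e3 := mul_le_mul_of_nonneg_left e2 hbdivM
      rw [mul_sub] at e3
      linarith
  -- bound (i)
  have h1 : C * Real.log ((C + a / M) / (C + b / M)) ≤ a / M := by
    rcases hC.eq_or_lt with h | h
    · rw [← h]; simpa using hadivM
    · have hp : 0 < C + a / M := by linarith
      have hq : 0 < C + b / M := by linarith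
      have l1 : Real.log ((C + a / M) / (C + b / M)) ≤ Real.log ((C + a / M) / C) := by
        apply Real.log_le_log (by positivity)
        apply div_le_div₀ hp0 le_rfl h (by linarith)
      have l2 : Real.log ((C + a / M) / C) ≤ (C + a / M) / C - 1 :=
        Real.log_le_sub_one_of_pos (by positivity)
      calc C * Real.log ((C + a / M) / (C + b / M)) ≤ C * ((C + a / M) / C - 1) :=
            mul_le_mul_of_nonneg_left (l1.trans l2) h.le
        _ = a / M := by field_simp; ring
  -- key identity
  have key : (C + a / M) * Real.log ((C + a / M) / P) -
      (C + b / M) * Real.log ((C + b / M) / P)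
      = C * Real.log ((C + a / M) / (C + b / M))
        + a / M * Real.log ((C + a / M) / P) - b / M * Real.log ((C + b / M) / P) := by
    rcases hp0.eq_or_lt with hp | hp
    · have hC0 : C = 0 := by linarith
      have ha0 : a / M = 0 := by linarith
      rw [hC0, ha0]
      simp
    · rcases hq0.eq_or_lt with hq | hq
      · have hC0 : C = 0 := by linarith
        have hb0 : b / M = 0 := by linarith
        rw [hC0, hb0]
        simp
      · rw [Real.log_div (ne_of_gt hp) (ne_of_gt hP0),
          Real.log_div (ne_of_gt hq) (ne_of_gt hP0),
          Real.log_div (ne_of_gt hp) (ne_of_gt hq)]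
        ring
  linarith

private lemma core_aux {Z : Type*} [Fintype Z] (M : ℕ) (hM : 2 ≤ M)
    (C a b PZ : Z → ℝ) (μ : ℝ)
    (hC0 : ∀ z, 0 ≤ C z) (hCsum : ∑ z, C z = 1 - 1 / (M : ℝ))
    (ha0 : ∀ z, 0 ≤ a z) (ha1 : ∑ z, a z = 1)
    (hb0 : ∀ z, 0 ≤ b z) (hb1 : ∑ z, b z = 1)
    (hPZ0 : ∀ z, 0 ≤ PZ z) (hPZ1 : ∑ z, PZ z = 1)
    (hCP : ∀ z, PZ z = 0 → C z = 0) (haP : ∀ z, PZ z = 0 → a z = 0)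
    (hbP : ∀ z, PZ z = 0 → b z = 0)
    (hμ0 : 0 < μ) (hμle : ∀ z, 0 < PZ z → μ ≤ PZ z) :
    KL (fun z => C z + a z / (M : ℝ)) PZ - KL (fun z => C z + b z / (M : ℝ)) PZ
      ≤ 1 / (M : ℝ) + 1 / (M : ℝ) * Real.log M + 1 / (M : ℝ) * Real.log (1 / μ) := by
  have hM0 : (0 : ℝ) < M := by
    have : (0 : ℕ) < M := by omega
    exact_mod_cast this
  have hsum1 : ∑ z, (C z + a z / (M : ℝ)) = 1 := by
    rw [Finset.sum_add_distrib, hCsum, ← Finset.sum_div, ha1]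
    ring
  have hp1 : ∀ z, C z + a z / (M : ℝ) ≤ 1 := by
    intro z
    rw [← hsum1]
    exact Finset.single_le_sum
      (fun w _ => add_nonneg (hC0 w) (div_nonneg (ha0 w) hM0.le)) (Finset.mem_univ z)
  unfold KL
  rw [← Finset.sum_sub_distrib]
  have step : ∀ z ∈ Finset.univ,
      (C z + a z / (M : ℝ)) * Real.log ((C z + a z / (M : ℝ)) / PZ z)
        - (C z + b z / (M : ℝ)) * Real.log ((C z + b z / (M : ℝ)) / PZ z)
      ≤ a z / (M : ℝ) + a z / (M : ℝ) * Real.log (1 / μ)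
        + b z / (M : ℝ) * Real.log M - b z / (M : ℝ) * Real.log (b z / PZ z) :=
    fun z _ => ptwise_aux (M : ℝ) hM0 (C z) (a z) (b z) (PZ z) μ
      (hC0 z) (ha0 z) (hb0 z) (hPZ0 z) (hCP z) (haP z) (hbP z) hμ0 (hμle z) (hp1 z)
  refine le_trans (Finset.sum_le_sum step) ?_
  have expand : ∑ z, (a z / (M : ℝ) + a z / (M : ℝ) * Real.log (1 / μ)
        + b z / (M : ℝ) * Real.log M - b z / (M : ℝ) * Real.log (b z / PZ z))
      = (∑ z, a z) * ((1 + Real.log (1 / μ)) / (M : ℝ))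
        + (∑ z, b z) * (Real.log M / (M : ℝ))
        - (∑ z, b z * Real.log (b z / PZ z)) * (1 / (M : ℝ)) := by
    rw [Finset.sum_mul, Finset.sum_mul, Finset.sum_mul, ← Finset.sum_add_distrib,
      ← Finset.sum_sub_distrib]
    exact Finset.sum_congr rfl fun z _ => by ring
  rw [expand, ha1, hb1]
  have hg := gibbs_aux b PZ hb0 hb1 hPZ0 hPZ1 hbP
  have hgn : 0 ≤ (∑ z, b z * Real.log (b z / PZ z)) * (1 / (M : ℝ)) :=
    mul_nonneg hg (by positivity)
  have e : 1 * ((1 + Real.log (1 / μ)) / (M : ℝ)) + 1 * (Real.log M / (M : ℝ))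
      = 1 / (M : ℝ) + 1 / (M : ℝ) * Real.log (M : ℝ) + 1 / (M : ℝ) * Real.log (1 / μ) := by
    ring
  linarith

theorem kl_bounded_difference {X Z : Type*} [Fintype X] [Fintype Z]
    (M : ℕ) (hM : 2 ≤ M) (W : X → Z → ℝ)
    (hW0 : ∀ x z, 0 ≤ W x z) (hW1 : ∀ x, ∑ z, W x z = 1)
    (PZ : Z → ℝ) (hPZ0 : ∀ z, 0 ≤ PZ z) (hPZ1 : ∑ z, PZ z = 1)
    (hac : ∀ x z, PZ z = 0 → W x z = 0)
    (x : Fin M → X) (i : Fin M) (x' : X) :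
    |KL (fun z => (1 / (M : ℝ)) * ∑ w, W (x w) z) PZ -
      KL (fun z => (1 / (M : ℝ)) * ∑ w, W (Function.update x i x' w) z) PZ|
      ≤ (1 / (M : ℝ)) *
        Real.log ((M : ℝ) * (Fintype.card Z : ℝ) / (minPosMass PZ) ^ 2) := by
  classical
  have hM0 : (0 : ℝ) < M := by
    have : (0 : ℕ) < M := by omega
    exact_mod_cast this
  -- existence of a point of positive mass
  obtain ⟨z0, hz0⟩ : ∃ z, 0 < PZ z := by
    by_contra h
    push_neg at h
    have : ∑ z, PZ z = 0 :=
      Finset.sum_eq_zero fun z _ => le_antisymm (h z) (hPZ0 z)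
    rw [hPZ1] at this
    norm_num at this
  have : Nonempty Z := ⟨z0⟩
  have hcard1 : (0 : ℝ) < (Fintype.card Z : ℝ) := by
    exact_mod_cast Fintype.card_pos
  -- facts about μ
  set μ := minPosMass PZ with hμdef
  have hsetfin : {r : ℝ | ∃ z, PZ z = r ∧ 0 < r}.Finite :=
    (Set.finite_range PZ).subset (by rintro r ⟨z, rfl, _⟩; exact Set.mem_range_self z)
  have hmem : μ ∈ {r : ℝ | ∃ z, PZ z = r ∧ 0 < r} :=
    Set.Nonempty.csInf_mem ⟨PZ z0, z0, rfl, hz0⟩ hsetfin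
  obtain ⟨zs, hzs, hμ0⟩ := hmem
  have hμle : ∀ z, 0 < PZ z → μ ≤ PZ z := fun z hz =>
    csInf_le hsetfin.bddBelow ⟨z, rfl, hz⟩
  have hμ1 : μ ≤ 1 := by
    rw [← hzs, ← hPZ1]
    exact Finset.single_le_sum (fun w _ => hPZ0 w) (Finset.mem_univ zs)
  by_cases hsupp : ∃ z, z ≠ z0 ∧ 0 < PZ z
  · -- main case : at least two points of positive mass
    obtain ⟨z1, hz1ne, hz1⟩ := hsupp
    have hn2 : 2 ≤ Fintype.card Z := Fintype.one_lt_card_iff.mpr ⟨z1, z0, hz1ne⟩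
    have hμhalf : μ ≤ 1 / 2 := by
      have hpair : PZ z1 + PZ z0 ≤ 1 := by
        calc PZ z1 + PZ z0 = ∑ z ∈ ({z1, z0} : Finset Z), PZ z :=
              (Finset.sum_pair hz1ne).symm
          _ ≤ ∑ z, PZ z := Finset.sum_le_sum_of_subset_of_nonneg
              (Finset.subset_univ _) (fun z _ _ => hPZ0 z)
          _ = 1 := hPZ1
      have l1 := hμle z1 hz1
      have l2 := hμle z0 hz0
      linarith
    -- set up the decomposition of the mixtures
    set C : Z → ℝ := fun z => (1 / (M : ℝ)) * ∑ w ∈ Finset.univ.erase i, W (x w) z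
      with hCdef
    have hC0 : ∀ z, 0 ≤ C z := fun z =>
      mul_nonneg (by positivity) (Finset.sum_nonneg fun w _ => hW0 _ z)
    have hCsum : ∑ z, C z = 1 - 1 / (M : ℝ) := by
      have hcarde : (Finset.univ.erase i).card = M - 1 := by
        rw [Finset.card_erase_of_mem (Finset.mem_univ i), Finset.card_univ,
          Fintype.card_fin]
      calc ∑ z, (1 / (M : ℝ)) * ∑ w ∈ Finset.univ.erase i, W (x w) z
          = (1 / (M : ℝ)) * ∑ w ∈ Finset.univ.erase i, ∑ z, W (x w) z := by
            rw [← Finset.mul_sum, Finset.sum_comm]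
        _ = (1 / (M : ℝ)) * ((M : ℝ) - 1) := by
            rw [Finset.sum_congr rfl fun w _ => hW1 (x w), Finset.sum_const,
              hcarde, nsmul_eq_mul, mul_one, Nat.cast_sub (by omega), Nat.cast_one]
        _ = 1 - 1 / (M : ℝ) := by field_simp
    have hCP : ∀ z, PZ z = 0 → C z = 0 := fun z hz => by
      rw [hCdef]
      simp only
      rw [Finset.sum_eq_zero fun w _ => hac (x w) z hz, mul_zero]
    have hfun1 : (fun z => (1 / (M : ℝ)) * ∑ w, W (x w) z)
        = fun z => C z + W (x i) z / (M : ℝ) := by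
      funext z
      rw [hCdef]
      simp only
      rw [← Finset.add_sum_erase _ _ (Finset.mem_univ i)]
      ring
    have hfun2 : (fun z => (1 / (M : ℝ)) * ∑ w, W (Function.update x i x' w) z)
        = fun z => C z + W x' z / (M : ℝ) := by
      funext z
      rw [hCdef]
      simp only
      rw [← Finset.add_sum_erase _ (fun w => W (Function.update x i x' w) z)
        (Finset.mem_univ i), Function.update_self,
        Finset.sum_congr rfl fun w hw => by
          rw [Function.update_of_ne (Finset.ne_of_mem_erase hw)]]
      ring
    rw [hfun1, hfun2]
    have bound1 := core_aux M hM C (fun z => W (x i) z) (fun z => W x' z) PZ μ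
      hC0 hCsum (fun z => hW0 _ z) (hW1 _) (fun z => hW0 _ z) (hW1 _) hPZ0 hPZ1
      hCP (fun z hz => hac _ z hz) (fun z hz => hac _ z hz) hμ0 hμle
    have bound2 := core_aux M hM C (fun z => W x' z) (fun z => W (x i) z) PZ μ
      hC0 hCsum (fun z => hW0 _ z) (hW1 _) (fun z => hW0 _ z) (hW1 _) hPZ0 hPZ1
      hCP (fun z hz => hac _ z hz) (fun z hz => hac _ z hz) hμ0 hμle
    -- compare the bound with the target
    have hfinal : 1 / (M : ℝ) + 1 / (M : ℝ) * Real.log M + 1 / (M : ℝ) * Real.log (1 / μ)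
        ≤ (1 / (M : ℝ)) * Real.log ((M : ℝ) * (Fintype.card Z : ℝ) / μ ^ 2) := by
      have hlogeq : Real.log ((M : ℝ) * (Fintype.card Z : ℝ) / μ ^ 2)
          = Real.log M + Real.log (Fintype.card Z : ℝ) - 2 * Real.log μ := by
        rw [Real.log_div (by positivity) (by positivity),
          Real.log_mul (by positivity) (by positivity), Real.log_pow]
        ring
      have hinv : Real.log (1 / μ) = -Real.log μ := by
        rw [one_div, Real.log_inv]
      have hkey : (1 : ℝ) ≤ Real.log (Fintype.card Z : ℝ) - Real.log μ := by
        have l1 : Real.log 2 ≤ Real.log (Fintype.card Z : ℝ) :=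
          Real.log_le_log (by norm_num) (by exact_mod_cast hn2)
        have l2 : Real.log μ ≤ Real.log (1 / 2) := Real.log_le_log hμ0 hμhalf
        have l3 : Real.log (1 / 2 : ℝ) = -Real.log 2 := by
          rw [one_div, Real.log_inv]
        have l4 := Real.log_two_gt_d9
        rw [l3] at l2
        linarith
      calc 1 / (M : ℝ) + 1 / (M : ℝ) * Real.log M + 1 / (M : ℝ) * Real.log (1 / μ)
          = (1 / (M : ℝ)) * (1 + Real.log M + -Real.log μ) := by rw [hinv]; ring
        _ ≤ (1 / (M : ℝ)) * (Real.log M + Real.log (Fintype.card Z : ℝ)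
              - 2 * Real.log μ) := by
            apply mul_le_mul_of_nonneg_left _ (by positivity)
            linarith
        _ = (1 / (M : ℝ)) * Real.log ((M : ℝ) * (Fintype.card Z : ℝ) / μ ^ 2) := by
            rw [hlogeq]
    rw [abs_sub_le_iff]
    exact ⟨le_trans bound1 hfinal, le_trans bound2 hfinal⟩
  · -- degenerate case : PZ is a point mass, both mixtures are equal
    push_neg at hsupp
    have hzero : ∀ z, z ≠ z0 → PZ z = 0 := by
      intro z hz
      rcases (hPZ0 z).eq_or_lt with h | h
      · exact h.symm
      · exact absurd h (by simpa using hsupp z hz)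
    have hWone : ∀ x'' : X, W x'' z0 = 1 := by
      intro x''
      have : ∑ z, W x'' z = W x'' z0 :=
        Finset.sum_eq_single z0 (fun z _ hz => hac x'' z (hzero z hz))
          (fun h => absurd (Finset.mem_univ z0) h)
      rw [← this, hW1]
    have hPeq : (fun z => (1 / (M : ℝ)) * ∑ w, W (x w) z)
        = fun z => (1 / (M : ℝ)) * ∑ w, W (Function.update x i x' w) z := by
      funext z
      by_cases hz : z = z0
      · subst hz
        have hone : ∀ y : Fin M → X, ∑ w, W (y w) z = (M : ℝ) := by
          intro y
          rw [Finset.sum_congr rfl fun w _ => hWone (y w), Finset.sum_const,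
            Finset.card_univ, Fintype.card_fin, nsmul_eq_mul, mul_one]
        rw [hone x, hone _]
      · rw [Finset.sum_eq_zero fun w _ => hac _ z (hzero z hz),
          Finset.sum_eq_zero fun w _ => hac _ z (hzero z hz)]
    rw [hPeq, sub_self, abs_zero]
    apply mul_nonneg (by positivity)
    apply Real.log_nonneg
    rw [le_div_iff₀ (by positivity)]
    have hM2 : (2 : ℝ) ≤ (M : ℝ) := by exact_mod_cast hM
    have hc1 : (1 : ℝ) ≤ (Fintype.card Z : ℝ) := by
      exact_mod_cast Fintype.card_pos
    nlinarith
end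

section
/- Let X, Z be finite sets, W a channel from X to Z, P_X a distribution on X, and P_Z(z) = Σ_x P_X(x) W(z|x) with minimum positive mass μ_Z. If X_1,…,X_M are i.i.d. with distribution P_X and P̂(z) = (1/M) Σ_{w=1}^M W(z|X_w), then for all real γ, E[ D(P̂ ‖ P_Z) ] ≤ log(1/μ_Z + 1) · Pr[ log( W(Z|X)/P_Z(Z) ) > γ ] + exp(γ)/M, where (X,Z) ∼ P_X × W in the probability on the right. -/
open Finset

section helpers
variable {ι X : Type*} [Fintype ι] [Fintype X] [DecidableEq ι] [DecidableEq X]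
set_option linter.unusedSectionVars false
lemma L1 (PX : X → ℝ) (h1 : ∑ x, PX x = 1) :
    ∑ c : ι → X, ∏ v, PX (c v) = 1 := by
  rw [← Fintype.prod_sum]; simp [h1]

lemma L2 (PX : X → ℝ) (h1 : ∑ x, PX x = 1) (w : ι) (x : X) :
    ∑ c : ι → X, (∏ v, PX (c v)) * (if c w = x then 1 else 0) = PX x := by
  have key : ∀ c : ι → X, (∏ v, PX (c v)) * (if c w = x then 1 else 0)
      = ∏ v, (if v = w then PX (c v) * (if c v = x then 1 else 0) else PX (c v)) := by
    intro c
    rw [← Finset.mul_prod_erase univ (fun v => if v = w then PX (c v) * (if c v = x then 1 else 0) else PX (c v)) (mem_univ w),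
        ← Finset.mul_prod_erase univ (fun v => PX (c v)) (mem_univ w)]
    rw [Finset.prod_congr rfl (fun v hv => if_neg (Finset.ne_of_mem_erase hv))]
    rw [if_pos rfl]
    ring
  simp_rw [key]
  rw [← Fintype.prod_sum (fun (v : ι) (y : X) => if v = w then PX y * (if y = x then 1 else 0) else PX y)]
  have h2 : ∀ v : ι, (∑ y, if v = w then PX y * (if y = x then 1 else 0) else PX y)
      = if v = w then PX x else 1 := by
    intro v
    by_cases hv : v = w <;>
      simp [hv, h1, mul_ite, mul_one, mul_zero, Finset.sum_ite_eq' univ x PX]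
  simp_rw [h2]
  simp

lemma L3 (PX : X → ℝ) (h1 : ∑ x, PX x = 1) (g : X → ℝ) {w u : ι} (huw : u ≠ w) (x : X) :
    ∑ c : ι → X, (∏ v, PX (c v)) * (if c w = x then 1 else 0) * g (c u)
      = PX x * ∑ y, PX y * g y := by
  have key : ∀ c : ι → X, (∏ v, PX (c v)) * (if c w = x then 1 else 0) * g (c u)
      = ∏ v, (if v = w then PX (c v) * (if c v = x then 1 else 0) else
          if v = u then PX (c v) * g (c v) else PX (c v)) := by
    intro c
    set f : ι → ℝ := fun v => (if v = w then PX (c v) * (if c v = x then 1 else 0) else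
          if v = u then PX (c v) * g (c v) else PX (c v)) with hf
    have hu' : u ∈ univ.erase w := Finset.mem_erase.2 ⟨huw, mem_univ u⟩
    rw [← Finset.mul_prod_erase univ f (mem_univ w), ← Finset.mul_prod_erase _ f hu',
        ← Finset.mul_prod_erase univ (fun v => PX (c v)) (mem_univ w),
        ← Finset.mul_prod_erase _ (fun v => PX (c v)) hu']
    rw [Finset.prod_congr rfl (fun v hv => show f v = PX (c v) by
      have hvu : v ≠ u := Finset.ne_of_mem_erase hv
      have hvw : v ≠ w := Finset.ne_of_mem_erase (Finset.mem_of_mem_erase hv)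
      simp [hf, hvu, hvw])]
    have hfw : f w = PX (c w) * (if c w = x then 1 else 0) := by simp [hf]
    have hfu : f u = PX (c u) * g (c u) := by simp [hf, huw]
    rw [hfw, hfu]; ring
  simp_rw [key]
  rw [← Fintype.prod_sum (fun (v : ι) (y : X) => if v = w then PX y * (if y = x then 1 else 0) else
        if v = u then PX y * g y else PX y)]
  have h2 : ∀ v : ι, (∑ y, if v = w then PX y * (if y = x then 1 else 0) else
        if v = u then PX y * g y else PX y)
      = if v = w then PX x else if v = u then (∑ y, PX y * g y) else 1 := by
    intro v
    by_cases hv : v = w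
    · simp [hv, mul_ite, mul_one, mul_zero, Finset.sum_ite_eq' univ x PX]
    · by_cases hv2 : v = u <;> simp [hv, hv2, h1]
  simp_rw [h2]
  have h3 : ∀ v ∈ (univ.erase w).erase u,
      (if v = w then PX x else if v = u then (∑ y, PX y * g y) else 1) = 1 := by
    intro v hv
    simp [Finset.ne_of_mem_erase hv, Finset.ne_of_mem_erase (Finset.mem_of_mem_erase hv)]
  rw [← Finset.mul_prod_erase univ _ (mem_univ w),
      ← Finset.mul_prod_erase _ _ (Finset.mem_erase.2 ⟨huw, mem_univ u⟩),
      Finset.prod_congr rfl h3, Finset.prod_const_one]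
  simp [huw]

lemma Azw_le (PX : X → ℝ) (hPX0 : ∀ x, 0 ≤ PX x) (h1 : ∑ x, PX x = 1)
    (g : X → ℝ) (hg0 : ∀ x, 0 ≤ g x)
    (p : ℝ) (hp : p = ∑ y, PX y * g y)
    (m : ℝ) (hm : (Fintype.card ι : ℝ) ≤ m) (hm0 : 0 < m) (w : ι) :
    ∑ c : ι → X, (∏ v, PX (c v)) * g (c w) * Real.log ((∑ v, g (c v)) / (m * p))
      ≤ ∑ x, PX x * g x * Real.log (g x / (m * p) + 1) := by
  have expand : ∀ c : ι → X, (∏ v, PX (c v)) * g (c w) * Real.log ((∑ v, g (c v)) / (m * p))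
      = ∑ x, (if c w = x then (∏ v, PX (c v)) * g x *
          Real.log ((g x + ∑ v ∈ univ.erase w, g (c v)) / (m * p)) else 0) := by
    intro c
    rw [Finset.sum_ite_eq univ (c w)
      (fun x => (∏ v, PX (c v)) * g x * Real.log ((g x + ∑ v ∈ univ.erase w, g (c v)) / (m * p)))]
    rw [if_pos (mem_univ _), Finset.add_sum_erase univ (fun v => g (c v)) (mem_univ w)]
  simp_rw [expand]
  rw [Finset.sum_comm]
  apply Finset.sum_le_sum
  intro x _
  by_cases hgx : g x = 0
  · apply le_of_eq; simp [hgx]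
  by_cases hx : PX x = 0
  · apply le_of_eq
    rw [hx]
    simp only [zero_mul]
    apply Finset.sum_eq_zero
    intro c _
    split_ifs with h
    · rw [Finset.prod_eq_zero (mem_univ w) (by rw [h, hx])]; ring
    · rfl
  -- main case
  have hgx' : 0 < g x := lt_of_le_of_ne (hg0 x) (Ne.symm hgx)
  have hx' : 0 < PX x := lt_of_le_of_ne (hPX0 x) (Ne.symm hx)
  have hp0 : 0 < p := by
    rw [hp]
    calc (0:ℝ) < PX x * g x := by positivity
    _ ≤ ∑ y, PX y * g y := Finset.single_le_sum
        (fun y _ => mul_nonneg (hPX0 y) (hg0 y)) (mem_univ x)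
  have hmp : 0 < m * p := by positivity
  set R : (ι → X) → ℝ := fun c => ∑ v ∈ univ.erase w, g (c v) with hRdef
  set ν : (ι → X) → ℝ := fun c => (∏ v, PX (c v)) * (if c w = x then 1 else 0) / PX x with hνdef
  have hν0 : ∀ c : ι → X, 0 ≤ ν c := by
    intro c
    apply div_nonneg _ (hPX0 x)
    apply mul_nonneg (Finset.prod_nonneg fun v _ => hPX0 (c v))
    split_ifs <;> norm_num
  have hν1 : ∑ c : ι → X, ν c = 1 := by
    simp only [hνdef, ← Finset.sum_div, L2 PX h1 w x, div_self hx]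
  have hR0 : ∀ c, 0 ≤ R c := fun c => Finset.sum_nonneg fun v _ => hg0 (c v)
  have ht : ∀ c : ι → X, g x + R c ∈ Set.Ioi (0:ℝ) := fun c => by
    simp only [Set.mem_Ioi]; have := hR0 c; linarith
  have hRsum : ∑ c : ι → X, (∏ v, PX (c v)) * (if c w = x then 1 else 0) * R c
      = ((univ.erase w).card : ℝ) * (PX x * p) := by
    simp only [hRdef, Finset.mul_sum]
    rw [Finset.sum_comm]
    rw [Finset.sum_congr rfl (fun u hu => L3 PX h1 g (Finset.ne_of_mem_erase hu) x)]
    rw [Finset.sum_const, nsmul_eq_mul, hp]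
  have hmean : ∑ c : ι → X, ν c * (g x + R c) = g x + ((univ.erase w).card : ℝ) * p := by
    simp_rw [mul_add]
    rw [Finset.sum_add_distrib, ← Finset.sum_mul, hν1, one_mul]
    congr 1
    have : ∀ c : ι → X, ν c * R c
        = ((∏ v, PX (c v)) * (if c w = x then 1 else 0) * R c) / PX x := by
      intro c; simp only [hνdef]; ring
    simp_rw [this]
    rw [← Finset.sum_div, hRsum]
    field_simp
  have jensen : ∑ c : ι → X, ν c * Real.log (g x + R c)
      ≤ Real.log (g x + ((univ.erase w).card : ℝ) * p) := by
    have := (strictConcaveOn_log_Ioi.concaveOn).le_map_sum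
      (t := (univ : Finset (ι → X))) (w := ν) (p := fun c => g x + R c)
      (fun c _ => hν0 c) hν1 (fun c _ => ht c)
    simp only [smul_eq_mul] at this
    rwa [hmean] at this
  have hlhs : (∑ c : ι → X, if c w = x then (∏ v, PX (c v)) * g x *
        Real.log ((g x + R c) / (m * p)) else 0)
      = PX x * g x * ((∑ c : ι → X, ν c * Real.log (g x + R c)) - Real.log (m * p)) := by
    have hterm : ∀ c : ι → X, (if c w = x then (∏ v, PX (c v)) * g x *
          Real.log ((g x + R c) / (m * p)) else 0)
        = PX x * g x * (ν c * Real.log (g x + R c) - ν c * Real.log (m * p)) := by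
      intro c
      rw [Real.log_div (ne_of_gt (ht c)) hmp.ne']
      simp only [hνdef]
      split_ifs with h
      · field_simp
      · simp
    simp_rw [hterm]
    rw [← Finset.mul_sum, Finset.sum_sub_distrib, ← Finset.sum_mul, hν1, one_mul]
  rw [hlhs]
  have hfinal : (∑ c : ι → X, ν c * Real.log (g x + R c)) - Real.log (m * p)
      ≤ Real.log (g x / (m * p) + 1) := by
    have h2 : Real.log (g x + ((univ.erase w).card : ℝ) * p) ≤ Real.log (g x + m * p) := by
      apply Real.log_le_log (by positivity)
      have hcard : ((univ.erase w).card : ℝ) ≤ m := by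
        have hc2 : ((univ.erase w).card : ℝ) ≤ (Fintype.card ι : ℝ) := by
          exact_mod_cast Finset.card_le_card (Finset.subset_univ _)
        linarith
      nlinarith
    have h3 : g x / (m * p) + 1 = (g x + m * p) / (m * p) := by field_simp
    rw [h3, Real.log_div (by positivity) hmp.ne']
    linarith [jensen, h2]
  exact mul_le_mul_of_nonneg_left hfinal (by positivity)

end helpers

/-- Expected relative entropy of the output distribution induced by an i.i.d. random
code of size `M` (expectation written as a finite sum over codebooks) is bounded by
`log(1/μ_Z + 1) · Pr[log(W(Z|X)/P_Z(Z)) > γ] + exp(γ)/M`. -/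
theorem expected_resolvability_bound {X Z : Type*} [Fintype X] [Fintype Z]
    (M : ℕ) (hM : 1 ≤ M) (W : X → Z → ℝ)
    (hW0 : ∀ x z, 0 ≤ W x z) (hW1 : ∀ x, ∑ z, W x z = 1)
    (PX : X → ℝ) (hPX0 : ∀ x, 0 ≤ PX x) (hPX1 : ∑ x, PX x = 1)
    (PZ : Z → ℝ) (hPZ : ∀ z, PZ z = ∑ x, PX x * W x z)
    (γ : ℝ) :
    (∑ c : Fin M → X, (∏ w, PX (c w)) *
        KL (fun z => (1 / (M : ℝ)) * ∑ w, W (c w) z) PZ)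
      ≤ Real.log (1 / minPosMass PZ + 1) *
          (∑ x, ∑ z, PX x * W x z *
            (if γ < Real.log (W x z / PZ z) then 1 else 0))
        + Real.exp γ / (M : ℝ) := by
  classical
  have hM0 : (0:ℝ) < (M:ℝ) := by exact_mod_cast hM
  -- Step 1
  have step1 : (∑ c : Fin M → X, (∏ w, PX (c w)) *
        KL (fun z => (1 / (M : ℝ)) * ∑ w, W (c w) z) PZ)
      ≤ ∑ z, ∑ x, PX x * W x z * Real.log (W x z / ((M:ℝ) * PZ z) + 1) := by
    have hKL : ∀ c : Fin M → X, (∏ w, PX (c w)) * KL (fun z => (1/(M:ℝ)) * ∑ w, W (c w) z) PZ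
        = ∑ z, (1/(M:ℝ)) * ∑ w, ((∏ v, PX (c v)) * W (c w) z *
            Real.log ((∑ v, W (c v) z) / ((M:ℝ) * PZ z))) := by
      intro c
      rw [KL, Finset.mul_sum]
      apply Finset.sum_congr rfl
      intro z _
      have harg : ((1/(M:ℝ)) * ∑ w, W (c w) z) / PZ z = (∑ v, W (c v) z) / ((M:ℝ) * PZ z) := by
        rw [one_div_mul_eq_div, div_div]
      rw [harg]
      have hsw : ∑ w, ((∏ v, PX (c v)) * W (c w) z *
            Real.log ((∑ v, W (c v) z) / ((M:ℝ) * PZ z)))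
          = ((∏ v, PX (c v)) * ∑ w, W (c w) z) *
            Real.log ((∑ v, W (c v) z) / ((M:ℝ) * PZ z)) := by
        rw [← Finset.sum_mul, ← Finset.mul_sum]
      rw [hsw]
      ring
    simp_rw [hKL]
    rw [Finset.sum_comm]
    apply Finset.sum_le_sum
    intro z _
    rw [← Finset.mul_sum, Finset.sum_comm]
    have hb : ∀ w : Fin M, (∑ c : Fin M → X, (∏ v, PX (c v)) * W (c w) z *
          Real.log ((∑ v, W (c v) z) / ((M:ℝ) * PZ z)))
        ≤ ∑ x, PX x * W x z * Real.log (W x z / ((M:ℝ) * PZ z) + 1) := by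
      intro w
      exact Azw_le PX hPX0 hPX1 (fun x => W x z) (fun x => hW0 x z) (PZ z) (hPZ z)
        (M:ℝ) (by simp) hM0 w
    calc (1/(M:ℝ)) * ∑ w : Fin M, (∑ c : Fin M → X, (∏ v, PX (c v)) * W (c w) z *
            Real.log ((∑ v, W (c v) z) / ((M:ℝ) * PZ z)))
        ≤ (1/(M:ℝ)) * ∑ _w : Fin M, (∑ x, PX x * W x z *
            Real.log (W x z / ((M:ℝ) * PZ z) + 1)) := by
          apply mul_le_mul_of_nonneg_left (Finset.sum_le_sum fun w _ => hb w) (by positivity)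
      _ = ∑ x, PX x * W x z * Real.log (W x z / ((M:ℝ) * PZ z) + 1) := by
          rw [Finset.sum_const, Finset.card_univ, Fintype.card_fin, nsmul_eq_mul]
          field_simp
  -- basic facts
  have hWle1 : ∀ x z, W x z ≤ 1 := by
    intro x z
    calc W x z ≤ ∑ z', W x z' := Finset.single_le_sum (fun z' _ => hW0 x z') (mem_univ z)
      _ = 1 := hW1 x
  have hPZ0 : ∀ z, 0 ≤ PZ z := by
    intro z; rw [hPZ z]
    exact Finset.sum_nonneg fun x _ => mul_nonneg (hPX0 x) (hW0 x z)
  have hPZsum : ∑ z, PZ z = 1 := by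
    simp_rw [hPZ]
    rw [Finset.sum_comm]
    simp_rw [← Finset.mul_sum, hW1, mul_one]
    exact hPX1
  -- minPosMass facts
  set μ := minPosMass PZ with hμdef
  have hexz : ∃ z, 0 < PZ z := by
    by_contra h
    push_neg at h
    have : ∑ z, PZ z = 0 := Finset.sum_eq_zero fun z _ => le_antisymm (h z) (hPZ0 z)
    rw [hPZsum] at this; norm_num at this
  obtain ⟨z0, hz0⟩ := hexz
  have hSfin : {r : ℝ | ∃ z, PZ z = r ∧ 0 < r}.Finite :=
    Set.Finite.subset (Set.finite_range PZ) (by rintro r ⟨z, hz, _⟩; exact ⟨z, hz⟩)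
  have hSne : {r : ℝ | ∃ z, PZ z = r ∧ 0 < r}.Nonempty := ⟨PZ z0, z0, rfl, hz0⟩
  have hμmem : μ ∈ {r : ℝ | ∃ z, PZ z = r ∧ 0 < r} := hSne.csInf_mem hSfin
  have hμpos : 0 < μ := by obtain ⟨z, _, hr⟩ := hμmem; exact hr
  have hμle : ∀ z, 0 < PZ z → μ ≤ PZ z := fun z hz =>
    csInf_le hSfin.bddBelow ⟨z, rfl, hz⟩
  -- Step 2 pointwise
  have step2 : ∀ x z, PX x * W x z * Real.log (W x z / ((M:ℝ) * PZ z) + 1)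
      ≤ Real.log (1/μ + 1) * (PX x * W x z * (if γ < Real.log (W x z / PZ z) then 1 else 0))
        + PX x * W x z * (Real.exp γ / (M:ℝ)) := by
    intro x z
    by_cases h0 : PX x * W x z = 0
    · rw [h0]; simp
    · have hPXx : 0 < PX x := by
        rcases mul_ne_zero_iff.1 h0 with ⟨h1', _⟩
        exact lt_of_le_of_ne (hPX0 x) (Ne.symm h1')
      have hWxz : 0 < W x z := by
        rcases mul_ne_zero_iff.1 h0 with ⟨_, h2⟩
        exact lt_of_le_of_ne (hW0 x z) (Ne.symm h2)
      have hPZz : 0 < PZ z := by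
        rw [hPZ z]
        calc (0:ℝ) < PX x * W x z := by positivity
          _ ≤ ∑ y, PX y * W y z := Finset.single_le_sum
              (fun y _ => mul_nonneg (hPX0 y) (hW0 y z)) (mem_univ x)
      have harg0 : 0 < W x z / ((M:ℝ) * PZ z) + 1 := by positivity
      by_cases hcond : γ < Real.log (W x z / PZ z)
      · rw [if_pos hcond]
        have hb : Real.log (W x z / ((M:ℝ) * PZ z) + 1) ≤ Real.log (1/μ + 1) := by
          apply Real.log_le_log harg0
          have h1' : W x z / ((M:ℝ) * PZ z) ≤ 1/μ := by
            apply div_le_div₀ zero_le_one (hWle1 x z) hμpos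
            have h2' := hμle z hPZz
            have hM1' : (1:ℝ) ≤ (M:ℝ) := by exact_mod_cast hM
            nlinarith
          linarith
        calc PX x * W x z * Real.log (W x z / ((M:ℝ) * PZ z) + 1)
            ≤ PX x * W x z * Real.log (1/μ + 1) :=
              mul_le_mul_of_nonneg_left hb (by positivity)
          _ = Real.log (1/μ + 1) * (PX x * W x z * 1) := by ring
          _ ≤ _ := le_add_of_nonneg_right (by positivity)
      · rw [if_neg hcond]
        have hlog : Real.log (W x z / ((M:ℝ) * PZ z) + 1) ≤ W x z / ((M:ℝ) * PZ z) := by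
          have := Real.log_le_sub_one_of_pos harg0
          linarith
        have hratio : W x z / PZ z ≤ Real.exp γ := by
          have h01 : 0 < W x z / PZ z := by positivity
          calc W x z / PZ z = Real.exp (Real.log (W x z / PZ z)) := (Real.exp_log h01).symm
            _ ≤ Real.exp γ := Real.exp_le_exp.2 (not_lt.1 hcond)
        have hchain : W x z / ((M:ℝ) * PZ z) ≤ Real.exp γ / (M:ℝ) := by
          have heq : W x z / ((M:ℝ) * PZ z) = (W x z / PZ z) / (M:ℝ) := by
            rw [div_div, mul_comm]
          rw [heq]
          gcongr
        calc PX x * W x z * Real.log (W x z / ((M:ℝ) * PZ z) + 1)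
            ≤ PX x * W x z * (Real.exp γ / (M:ℝ)) :=
              mul_le_mul_of_nonneg_left (hlog.trans hchain) (by positivity)
          _ = Real.log (1/μ + 1) * (PX x * W x z * 0) + PX x * W x z * (Real.exp γ / (M:ℝ)) := by
              ring
          _ = _ := rfl
  -- assemble
  have hsum1 : ∑ x, ∑ z, PX x * W x z = 1 := by
    simp_rw [← Finset.mul_sum, hW1, mul_one]
    exact hPX1
  calc (∑ c : Fin M → X, (∏ w, PX (c w)) *
        KL (fun z => (1 / (M : ℝ)) * ∑ w, W (c w) z) PZ)
      ≤ ∑ z, ∑ x, PX x * W x z * Real.log (W x z / ((M:ℝ) * PZ z) + 1) := step1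
    _ = ∑ x, ∑ z, PX x * W x z * Real.log (W x z / ((M:ℝ) * PZ z) + 1) := Finset.sum_comm
    _ ≤ ∑ x, ∑ z, (Real.log (1/μ + 1) *
          (PX x * W x z * (if γ < Real.log (W x z / PZ z) then 1 else 0))
          + PX x * W x z * (Real.exp γ / (M:ℝ))) :=
        Finset.sum_le_sum fun x _ => Finset.sum_le_sum fun z _ => step2 x z
    _ = Real.log (1/μ + 1) *
          (∑ x, ∑ z, PX x * W x z * (if γ < Real.log (W x z / PZ z) then 1 else 0))
          + (∑ x, ∑ z, PX x * W x z) * (Real.exp γ / (M:ℝ)) := by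
        rw [Finset.mul_sum, Finset.sum_mul, ← Finset.sum_add_distrib]
        apply Finset.sum_congr rfl
        intro x _
        rw [Finset.mul_sum, Finset.sum_mul, ← Finset.sum_add_distrib]
    _ = _ := by rw [hsum1, one_mul]
end

section
/- Let Y be a finite set, P_0, P_1 probability distributions on Y with P_0 everywhere positive, let ℓ, m ≥ 1, n ≥ mℓ, and let P_PPM be the product distribution on Y^n formed by ℓ independent blocks each distributed as P^{m,1} (the single-pulse mixture defined by P^{m,1}(y) = (1/m) Σ_{i=1}^m P_1(y_i) Π_{j≠i} P_0(y_j)) followed by n − mℓ coordinates distributed i.i.d. P_0. Then E_{P_PPM}[ P_PPM(Y)/P_0^{⊗n}(Y) ] = (1 + χ²(P_1‖P_0)/m)^ℓ ≤ exp( ℓ(ℓ+1) χ²(P_1‖P_0) / n ), where m = ⌊n/ℓ⌋. -/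
open Finset

private lemma sum_pi_prod_aux {ι : Type*} [Fintype ι] [DecidableEq ι] {Z : Type*} [Fintype Z]
    (g : ι → Z → ℝ) :
    ∑ z : ι → Z, ∏ j, g j (z j) = ∏ j, ∑ y, g j y :=
  (Fintype.prod_sum g).symm

private lemma prod_ite_erase {ι : Type*} [Fintype ι] [DecidableEq ι] (i : ι) (a b : ι → ℝ) :
    ∏ j, (if j = i then a j else b j) = a i * ∏ j ∈ Finset.univ.erase i, b j := by
  rw [← Finset.mul_prod_erase Finset.univ _ (Finset.mem_univ i), if_pos rfl]
  congr 1
  exact Finset.prod_congr rfl fun j hj => if_neg (Finset.ne_of_mem_erase hj)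

theorem ppm_expected_ratio {Y : Type*} [Fintype Y]
    (P0 P1 : Y → ℝ) (hP00 : ∀ y, 0 < P0 y) (hP10 : ∀ y, 0 ≤ P1 y)
    (hP01 : ∑ y, P0 y = 1) (hP11 : ∑ y, P1 y = 1)
    (ℓ m n : ℕ) (hℓ : 1 ≤ ℓ) (hm : 1 ≤ m) (hn : m * ℓ ≤ n)
    (hmdef : m = n / ℓ) (hℓn : ℓ * ℓ ≤ n)
    (Pm1 : (Fin m → Y) → ℝ)
    (hPm1 : ∀ y, Pm1 y =
      (1 / (m : ℝ)) * ∑ i, P1 (y i) * ∏ j ∈ Finset.univ.erase i, P0 (y j))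
    (PPPM : ((Fin ℓ → (Fin m → Y)) × (Fin (n - m * ℓ) → Y)) → ℝ)
    (hPPPM : ∀ yc, PPPM yc = (∏ b, Pm1 (yc.1 b)) * ∏ k, P0 (yc.2 k))
    (chi2 : ℝ) (hchi2 : chi2 = ∑ y, (P1 y - P0 y) ^ 2 / P0 y) :
    (∑ yc : (Fin ℓ → (Fin m → Y)) × (Fin (n - m * ℓ) → Y),
        PPPM yc * (PPPM yc /
          ((∏ b, ∏ i, P0 (yc.1 b i)) * ∏ k, P0 (yc.2 k))))
      = (1 + chi2 / (m : ℝ)) ^ ℓ ∧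
    (1 + chi2 / (m : ℝ)) ^ ℓ ≤
      Real.exp ((ℓ : ℝ) * ((ℓ : ℝ) + 1) * chi2 / (n : ℝ)) := by
  have hP0ne : ∀ y, P0 y ≠ 0 := fun y => (hP00 y).ne'
  have hm0 : (m : ℝ) ≠ 0 := Nat.cast_ne_zero.mpr (by omega)
  set C : ℝ := ∑ y, P1 y * P1 y / P0 y with hC
  have hchiC : chi2 = C - 1 := by
    rw [hchi2, hC]
    have h : ∀ y : Y, (P1 y - P0 y) ^ 2 / P0 y = P1 y * P1 y / P0 y - 2 * P1 y + P0 y := by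
      intro y; field_simp [hP0ne y]; ring
    rw [Finset.sum_congr rfl fun y _ => h y]
    rw [Finset.sum_add_distrib, Finset.sum_sub_distrib, ← Finset.mul_sum, hP01, hP11]
    ring
  -- single block computation
  have hblock : ∑ z : Fin m → Y, Pm1 z * (Pm1 z / ∏ i, P0 (z i)) = 1 + chi2 / (m : ℝ) := by
    have key : ∀ z : Fin m → Y, Pm1 z * (Pm1 z / ∏ i, P0 (z i)) =
        (1 / (m : ℝ) ^ 2) * ∑ i : Fin m, ∑ i' : Fin m, ∏ j : Fin m,
          ((if j = i then P1 (z j) else P0 (z j)) *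
            (if j = i' then P1 (z j) else P0 (z j)) / P0 (z j)) := by
      intro z
      have hA : ∀ i : Fin m, P1 (z i) * ∏ j ∈ Finset.univ.erase i, P0 (z j)
          = ∏ j, (if j = i then P1 (z j) else P0 (z j)) :=
        fun i => (prod_ite_erase i (fun j => P1 (z j)) (fun j => P0 (z j))).symm
      have hprod : ∀ i i' : Fin m,
          (∏ j, (if j = i then P1 (z j) else P0 (z j))) *
            (∏ j, (if j = i' then P1 (z j) else P0 (z j))) / ∏ j, P0 (z j)
          = ∏ j : Fin m, ((if j = i then P1 (z j) else P0 (z j)) *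
              (if j = i' then P1 (z j) else P0 (z j)) / P0 (z j)) := by
        intro i i'
        rw [Finset.prod_div_distrib, Finset.prod_mul_distrib]
      rw [hPm1, Finset.sum_congr rfl fun i _ => hA i]
      rw [Finset.sum_congr rfl fun i _ => Finset.sum_congr rfl fun i' _ => (hprod i i').symm]
      rw [show (∑ i : Fin m, ∑ i' : Fin m,
          (∏ j, (if j = i then P1 (z j) else P0 (z j))) *
            (∏ j, (if j = i' then P1 (z j) else P0 (z j))) / ∏ j, P0 (z j))
        = (∑ i : Fin m, ∏ j, (if j = i then P1 (z j) else P0 (z j))) *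
            (∑ i' : Fin m, ∏ j, (if j = i' then P1 (z j) else P0 (z j))) / ∏ j, P0 (z j) by
          rw [Finset.sum_mul_sum, Finset.sum_div]
          exact Finset.sum_congr rfl fun i _ => by rw [Finset.sum_div]]
      ring
    rw [Finset.sum_congr rfl fun z _ => key z, ← Finset.mul_sum]
    rw [Finset.sum_comm]
    rw [Finset.sum_congr rfl fun i _ => Finset.sum_comm]
    have hswap : ∀ i i' : Fin m,
        (∑ z : Fin m → Y, ∏ j : Fin m,
          ((if j = i then P1 (z j) else P0 (z j)) *
            (if j = i' then P1 (z j) else P0 (z j)) / P0 (z j)))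
        = if i = i' then C else 1 := by
      intro i i'
      rw [sum_pi_prod_aux (fun j y =>
        (if j = i then P1 y else P0 y) * (if j = i' then P1 y else P0 y) / P0 y)]
      by_cases h : i = i'
      · subst h
        rw [if_pos rfl]
        rw [Finset.prod_eq_single i]
        · exact Finset.sum_congr rfl fun y _ => by rw [if_pos rfl]
        · intro j _ hj
          rw [show (∑ y, (if j = i then P1 y else P0 y) * (if j = i then P1 y else P0 y) / P0 y)
              = ∑ y, P0 y from Finset.sum_congr rfl fun y _ => by
                rw [if_neg hj, mul_div_assoc, div_self (hP0ne y), mul_one]]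
          exact hP01
        · exact fun h => absurd (Finset.mem_univ i) h
      · rw [if_neg h]
        apply Finset.prod_eq_one
        intro j _
        by_cases hji : j = i
        · subst hji
          rw [show (∑ y, (if j = j then P1 y else P0 y) * (if j = i' then P1 y else P0 y) / P0 y)
              = ∑ y, P1 y from Finset.sum_congr rfl fun y _ => by
                rw [if_pos rfl, if_neg h, mul_div_assoc, div_self (hP0ne y), mul_one]]
          exact hP11
        · by_cases hji' : j = i'
          · subst hji'
            rw [show (∑ y, (if j = i then P1 y else P0 y) * (if j = j then P1 y else P0 y) / P0 y)
                = ∑ y, P1 y from Finset.sum_congr rfl fun y _ => by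
                  rw [if_pos rfl, if_neg hji, mul_comm (P0 y) (P1 y), mul_div_assoc,
                    div_self (hP0ne y), mul_one]]
            exact hP11
          · rw [show (∑ y, (if j = i then P1 y else P0 y) * (if j = i' then P1 y else P0 y) / P0 y)
                = ∑ y, P0 y from Finset.sum_congr rfl fun y _ => by
                  rw [if_neg hji, if_neg hji', mul_div_assoc, div_self (hP0ne y), mul_one]]
            exact hP01
    rw [Finset.sum_congr rfl fun i _ => Finset.sum_congr rfl fun i' _ => hswap i i']
    have hinner : ∀ i : Fin m, (∑ i' : Fin m, if i = i' then C else 1) = C - 1 + m := by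
      intro i
      have : ∀ i' : Fin m, (if i = i' then C else 1) = (if i = i' then C - 1 else 0) + 1 := by
        intro i'; split <;> ring
      rw [Finset.sum_congr rfl fun i' _ => this i', Finset.sum_add_distrib,
        Finset.sum_ite_eq, if_pos (Finset.mem_univ i), Finset.sum_const,
        Finset.card_univ, Fintype.card_fin, nsmul_eq_mul, mul_one]
    rw [Finset.sum_congr rfl fun i _ => hinner i, Finset.sum_const, Finset.card_univ,
      Fintype.card_fin, nsmul_eq_mul, hchiC]
    field_simp
    ring
  constructor
  · -- expectation equals (1 + chi2/m)^ℓ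
    have hQpos : ∀ z : Fin m → Y, (0:ℝ) < ∏ i, P0 (z i) :=
      fun z => Finset.prod_pos fun i _ => hP00 (z i)
    have hpoint : ∀ yc : (Fin ℓ → (Fin m → Y)) × (Fin (n - m * ℓ) → Y),
        PPPM yc * (PPPM yc / ((∏ b, ∏ i, P0 (yc.1 b i)) * ∏ k, P0 (yc.2 k)))
        = (∏ b, (Pm1 (yc.1 b) * (Pm1 (yc.1 b) / ∏ i, P0 (yc.1 b i)))) * ∏ k, P0 (yc.2 k) := by
      intro yc
      rw [hPPPM]
      have hBpos : (0:ℝ) < ∏ k, P0 (yc.2 k) := Finset.prod_pos fun k _ => hP00 (yc.2 k)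
      have hQ : (0:ℝ) < ∏ b, ∏ i, P0 (yc.1 b i) := Finset.prod_pos fun b _ => hQpos (yc.1 b)
      rw [show (∏ b, (Pm1 (yc.1 b) * (Pm1 (yc.1 b) / ∏ i, P0 (yc.1 b i))))
          = (∏ b, Pm1 (yc.1 b)) * ((∏ b, Pm1 (yc.1 b)) / ∏ b, ∏ i, P0 (yc.1 b i)) by
        rw [Finset.prod_mul_distrib, Finset.prod_div_distrib]]
      field_simp [hQ.ne', hBpos.ne']
    rw [Finset.sum_congr rfl fun yc _ => hpoint yc]
    rw [Fintype.sum_prod_type]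
    dsimp only
    rw [← Finset.sum_mul_sum]
    rw [sum_pi_prod_aux (fun (_ : Fin ℓ) (z : Fin m → Y) =>
      Pm1 z * (Pm1 z / ∏ i, P0 (z i)))]
    rw [sum_pi_prod_aux (fun (_ : Fin (n - m * ℓ)) (y : Y) => P0 y)]
    rw [Finset.prod_congr rfl fun b _ => hblock, Finset.prod_congr rfl fun k _ => hP01]
    simp
  · -- inequality
    have hchin : 0 ≤ chi2 := by
      rw [hchi2]
      exact Finset.sum_nonneg fun y _ => div_nonneg (sq_nonneg _) (hP00 y).le
    have hℓm : ℓ ≤ m := by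
      rw [hmdef]
      exact (Nat.le_div_iff_mul_le (by omega)).mpr hℓn
    have hnle : n ≤ (ℓ + 1) * m := by
      have h1 : ℓ * m + n % ℓ = n := by rw [hmdef]; exact Nat.div_add_mod n ℓ
      have h2 : n % ℓ < ℓ := Nat.mod_lt n (by omega)
      calc n = ℓ * m + n % ℓ := h1.symm
        _ ≤ ℓ * m + m := Nat.add_le_add_left (le_trans (le_of_lt h2) hℓm) _
        _ = (ℓ + 1) * m := by ring
    have hbase : (0:ℝ) ≤ 1 + chi2 / (m : ℝ) := by positivity
    have h1 : (1 + chi2 / (m : ℝ)) ^ ℓ ≤ Real.exp ((ℓ : ℝ) * (chi2 / (m : ℝ))) := by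
      calc (1 + chi2 / (m : ℝ)) ^ ℓ ≤ (Real.exp (chi2 / (m : ℝ))) ^ ℓ := by
            apply pow_le_pow_left₀ hbase
            rw [add_comm]
            exact Real.add_one_le_exp _
        _ = Real.exp ((ℓ : ℝ) * (chi2 / (m : ℝ))) := (Real.exp_nat_mul _ ℓ).symm
    refine h1.trans (Real.exp_le_exp.mpr ?_)
    have hnpos : (0:ℝ) < (n : ℝ) := by
      have : 0 < n := lt_of_lt_of_le (Nat.mul_pos hm hℓ) hn
      exact_mod_cast this
    have hmpos : (0:ℝ) < (m : ℝ) := by exact_mod_cast (by omega : 0 < m)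
    have hcast : (n : ℝ) ≤ ((ℓ : ℝ) + 1) * (m : ℝ) := by exact_mod_cast hnle
    rw [show (ℓ:ℝ) * (chi2 / (m:ℝ)) = (ℓ:ℝ) * chi2 / (m:ℝ) by ring,
      div_le_div_iff₀ hmpos hnpos]
    have hnn : (0:ℝ) ≤ (ℓ:ℝ) * chi2 := mul_nonneg (Nat.cast_nonneg ℓ) hchin
    nlinarith [mul_le_mul_of_nonneg_left hcast hnn]
end
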